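/- arXiv:2210.05985 — 2 statements merged into one kernel-verified Lean document; each statement's English description precedes it below -/
import Mathlib

section
/- Let δ₂ > 0, θ ∈ (0, π/4], and γ_j ∈ (0,1] for j = 1,…,n be chosen so that for each k ≤ n the quantity I_CHSH^k = 2^{2-k}(γ_k √δ₂ sin θ + cos θ ∏_{j=1}^{k-1}(1 + √(1-γ_j²))) exceeds 2. Then for every n there exists a choice of (θ, γ₁,…,γ_n) achieving I_CHSH^k > 2 for all k = 1,…,n. -/
open Real Finset

noncomputable def sAux (c : ℝ) : ℕ → ℝ
  | 0 => 0
  | k + 1 => sAux c k + ((2 ^ (k + 1) / c) * (1 + sAux c k)) ^ 2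

noncomputable def bAux (c : ℝ) (k : ℕ) : ℝ := (2 ^ k / c) * (1 + sAux c (k - 1))

lemma sAux_nonneg (c : ℝ) (k : ℕ) : 0 ≤ sAux c k := by
  induction k with
  | zero => simp [sAux]
  | succ k ih =>
      have := sq_nonneg ((2 ^ (k + 1) / c) * (1 + sAux c k))
      simp only [sAux]; linarith

lemma bAux_pos {c : ℝ} (hc : 0 < c) (k : ℕ) : 0 < bAux c k := by
  have h := sAux_nonneg c (k - 1)
  apply mul_pos (by positivity) (by linarith)

lemma sum_bAux_sq (c : ℝ) (m : ℕ) : ∑ j ∈ Icc 1 m, bAux c j ^ 2 = sAux c m := by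
  induction m with
  | zero => simp [sAux]
  | succ m ih =>
      rw [Finset.sum_Icc_succ_top (by omega), ih]
      simp [bAux, sAux]

lemma prod_lb (s : Finset ℕ) (x : ℕ → ℝ) (hx : ∀ j ∈ s, 0 ≤ x j ∧ x j ≤ 1) :
    (2:ℝ) ^ s.card * (1 - ∑ j ∈ s, x j) ≤ ∏ j ∈ s, (2 - x j) := by
  induction s using Finset.induction with
  | empty => simp
  | @insert a s ha ih =>
      have hxa := hx a (Finset.mem_insert_self a s)
      have hxs : ∀ j ∈ s, 0 ≤ x j ∧ x j ≤ 1 := fun j hj =>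
        hx j (Finset.mem_insert_of_mem hj)
      have ih' := ih hxs
      have hP0 : (0:ℝ) ≤ ∏ j ∈ s, (2 - x j) :=
        Finset.prod_nonneg fun j hj => by linarith [(hxs j hj).2]
      rw [Finset.prod_insert ha, Finset.sum_insert ha, Finset.card_insert_of_notMem ha]
      have h2c : (0:ℝ) < 2 ^ s.card := by positivity
      have hS0 : (0:ℝ) ≤ ∑ j ∈ s, x j :=
        Finset.sum_nonneg fun j hj => (hxs j hj).1
      rw [pow_succ]
      nlinarith [mul_le_mul_of_nonneg_left ih' (by linarith [hxa.2] : (0:ℝ) ≤ 2 - x a),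
        mul_nonneg (mul_nonneg h2c.le hxa.1) hS0, mul_nonneg h2c.le hxa.1]

lemma keyIneq (tw b c θ sm si co P : ℝ) (htw : 0 < tw) (hθ : 0 < θ)
    (hsm : 0 ≤ sm) (hbc : b * c = tw * 2 * (1 + sm)) (hb : 0 ≤ b * c)
    (hsin : θ / 2 ≤ si) (hco1 : 1 - θ ^ 2 / 2 ≤ co) (hco2 : co ≤ 1) (hco0 : 0 ≤ co)
    (hP : tw * (1 - θ ^ 2 * sm) ≤ P) : tw < b * θ * c * si + co * P := by
  have h1 : tw * (1 + sm) * θ ^ 2 ≤ b * θ * c * si := by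
    have := mul_le_mul_of_nonneg_left hsin (mul_nonneg hb hθ.le)
    nlinarith [this]
  have h2 : tw - tw * θ ^ 2 / 2 - tw * θ ^ 2 * sm ≤ co * P := by
    have := mul_le_mul_of_nonneg_left hP hco0
    nlinarith [this, mul_nonneg (sub_nonneg.mpr hco2)
      (mul_nonneg (mul_nonneg htw.le (sq_nonneg θ)) hsm),
      mul_le_mul_of_nonneg_right hco1 htw.le]
  nlinarith [h1, h2, mul_pos htw (pow_pos hθ 2)]

open Real Finset in
/-- Unbounded CHSH sharing: for every n there is a choice of θ ∈ (0,π/4] and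
sharpnesses γ₁,…,γₙ ∈ (0,1] such that every sequential CHSH value
I_CHSH^k = 2^{2-k}(γ_k √δ₂ sin θ + cos θ ∏_{j=1}^{k-1}(1+√(1-γ_j²))) exceeds 2. -/
theorem unbounded_sharing (δ₂ : ℝ) (hδ₂ : 0 < δ₂) (n : ℕ) :
    ∃ θ : ℝ, θ ∈ Set.Ioc 0 (π / 4) ∧
    ∃ γ : ℕ → ℝ, (∀ j, 1 ≤ j → j ≤ n → γ j ∈ Set.Ioc (0:ℝ) 1) ∧
      ∀ k, 1 ≤ k → k ≤ n →
        2 < (2:ℝ) ^ ((2:ℤ) - (k:ℤ)) *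
          (γ k * Real.sqrt δ₂ * Real.sin θ +
            Real.cos θ * ∏ j ∈ Finset.Icc 1 (k - 1), (1 + Real.sqrt (1 - γ j ^ 2))) := by
  set c : ℝ := Real.sqrt δ₂ with hc
  have hcpos : 0 < c := Real.sqrt_pos.mpr hδ₂
  set S : ℝ := ∑ j ∈ Icc 1 n, bAux c j with hS
  have hS0 : 0 ≤ S := Finset.sum_nonneg fun j _ => (bAux_pos hcpos j).le
  set θ : ℝ := min (π / 8) (1 / (1 + S)) with hθdef
  have hπ : (0:ℝ) < π := Real.pi_pos
  have hθpos : 0 < θ := lt_min (by positivity) (by positivity)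
  have hθle1S : θ ≤ 1 / (1 + S) := min_le_right _ _
  have hθle1 : θ ≤ 1 := hθle1S.trans (by
    rw [div_le_one (by linarith)]; linarith)
  have hθleπ8 : θ ≤ π / 8 := min_le_left _ _
  clear_value θ S c
  refine ⟨θ, ⟨hθpos, hθleπ8.trans (by linarith)⟩, fun j => bAux c j * θ, ?_, ?_⟩
  · -- γ_j ∈ (0,1]
    intro j hj1 hjn
    have hbpos := bAux_pos hcpos j
    refine ⟨mul_pos hbpos hθpos, ?_⟩
    have hbS : bAux c j ≤ S := by
      rw [hS]
      exact Finset.single_le_sum (fun i _ => (bAux_pos hcpos i).le)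
        (Finset.mem_Icc.mpr ⟨hj1, hjn⟩)
    calc bAux c j * θ ≤ (1 + S) * (1 / (1 + S)) := by
          apply mul_le_mul (by linarith) hθle1S hθpos.le (by linarith)
      _ = 1 := by field_simp
  · intro k hk1 hkn
    obtain ⟨m, rfl⟩ : ∃ m, k = m + 1 := ⟨k - 1, by omega⟩
    simp only [Nat.add_sub_cancel]
    -- basic bounds
    have hsin : θ / 2 ≤ Real.sin θ := by
      have := Real.sin_gt_sub_cube hθpos
      nlinarith [sq_nonneg θ]
    have hcos1 : 1 - θ ^ 2 / 2 ≤ Real.cos θ := Real.one_sub_sq_div_two_le_cos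
    have hcos2 : Real.cos θ ≤ 1 := Real.cos_le_one θ
    have hcos0 : 0 ≤ Real.cos θ := by
      apply Real.cos_nonneg_of_mem_Icc
      constructor <;> nlinarith
    -- memberships give γ_j ∈ (0,1] for j in the product
    have hγmem : ∀ j ∈ Icc 1 m, 0 < bAux c j * θ ∧ bAux c j * θ ≤ 1 := by
      intro j hj
      rw [Finset.mem_Icc] at hj
      have hbpos := bAux_pos hcpos j
      refine ⟨mul_pos hbpos hθpos, ?_⟩
      have hbS : bAux c j ≤ S := by
        rw [hS]
        exact Finset.single_le_sum (fun i _ => (bAux_pos hcpos i).le)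
          (Finset.mem_Icc.mpr ⟨hj.1, (by omega : j ≤ n)⟩)
      calc bAux c j * θ ≤ (1 + S) * (1 / (1 + S)) := by
            apply mul_le_mul (by linarith) hθle1S hθpos.le (by linarith)
        _ = 1 := by field_simp
    -- product lower bound
    have hP1 : ∏ j ∈ Icc 1 m, (2 - (bAux c j * θ) ^ 2) ≤
        ∏ j ∈ Icc 1 m, (1 + Real.sqrt (1 - (bAux c j * θ) ^ 2)) := by
      apply Finset.prod_le_prod
      · intro j hj
        have := hγmem j hj
        nlinarith [this.1, this.2]
      · intro j hj
        obtain ⟨h0, h1⟩ := hγmem j hj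
        have hsq : (bAux c j * θ) ^ 2 ≤ 1 := by nlinarith
        have : 1 - (bAux c j * θ) ^ 2 ≤ Real.sqrt (1 - (bAux c j * θ) ^ 2) := by
          rw [Real.le_sqrt (by nlinarith) (by nlinarith)]
          nlinarith [sq_nonneg (bAux c j * θ)]
        linarith
    have hP2 : (2:ℝ) ^ m * (1 - ∑ j ∈ Icc 1 m, (bAux c j * θ) ^ 2) ≤
        ∏ j ∈ Icc 1 m, (2 - (bAux c j * θ) ^ 2) := by
      have := prod_lb (Icc 1 m) (fun j => (bAux c j * θ) ^ 2) (fun j hj => by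
        obtain ⟨h0, h1⟩ := hγmem j hj
        refine ⟨by positivity, ?_⟩
        show (bAux c j * θ) ^ 2 ≤ 1
        nlinarith)
      simpa [Nat.card_Icc] using this
    have hsum : ∑ j ∈ Icc 1 m, (bAux c j * θ) ^ 2 = θ ^ 2 * sAux c m := by
      rw [← sum_bAux_sq c m, Finset.mul_sum]
      apply Finset.sum_congr rfl
      intro j _; ring
    have hsm : 0 ≤ sAux c m := sAux_nonneg c m
    have h2m : (0:ℝ) < 2 ^ m := by positivity
    -- key identity for b_{m+1}
    have hbc : bAux c (m + 1) * c = 2 ^ m * 2 * (1 + sAux c m) := by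
      simp only [bAux, Nat.add_sub_cancel]
      rw [mul_right_comm, div_mul_cancel₀ _ hcpos.ne']
      ring
    -- main inequality: 2^m < X
    have hPall : (2:ℝ) ^ m * (1 - θ ^ 2 * sAux c m) ≤
        ∏ j ∈ Icc 1 m, (1 + Real.sqrt (1 - (bAux c j * θ) ^ 2)) := by
      rw [← hsum]; exact hP2.trans hP1
    have hmain : (2:ℝ) ^ m < bAux c (m + 1) * θ * c * Real.sin θ +
        Real.cos θ * ∏ j ∈ Icc 1 m, (1 + Real.sqrt (1 - (bAux c j * θ) ^ 2)) :=
      keyIneq _ _ _ _ _ _ _ _ h2m hθpos hsm hbc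
        (mul_nonneg (bAux_pos hcpos _).le hcpos.le) hsin hcos1 hcos2 hcos0 hPall
    -- convert via the 2^(2-k) prefactor
    have hzpos : (0:ℝ) < (2:ℝ) ^ ((2:ℤ) - ((m + 1 : ℕ) : ℤ)) := by positivity
    have hz : (2:ℝ) ^ ((2:ℤ) - ((m + 1 : ℕ) : ℤ)) * (2:ℝ) ^ m = 2 := by
      rw [← zpow_natCast (2:ℝ) m, ← zpow_add₀ (by norm_num : (2:ℝ) ≠ 0)]
      have : (2:ℤ) - ((m + 1 : ℕ) : ℤ) + (m : ℤ) = 1 := by push_cast; ring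
      rw [this, zpow_one]
    calc (2:ℝ) = (2:ℝ) ^ ((2:ℤ) - ((m + 1 : ℕ) : ℤ)) * (2:ℝ) ^ m := hz.symm
      _ < _ := mul_lt_mul_of_pos_left hmain hzpos
end

section
/- Under a 2-local hidden variable model, |I| ≤ ∫∫ q₁(λ)q₂(μ)|⟨A₀+A₁⟩_λ||⟨B₀⟩_{λ,μ}||⟨C₀+C₁⟩_μ| dλ dμ and |J| ≤ ∫∫ q₁(λ)q₂(μ)|⟨A₀−A₁⟩_λ||⟨C₀−C₁⟩_μ| dλ dμ, and since |⟨A₀+A₁⟩_λ| + |⟨A₀−A₁⟩_λ| ≤ 2 and similarly for C, the Cauchy–Schwarz-type estimate √|I| + √|J| ≤ 2 follows. -/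
open MeasureTheory

private lemma sqrt_mul_le_half_add {x y : ℝ} (hx : 0 ≤ x) (hy : 0 ≤ y) :
    Real.sqrt (x * y) ≤ (x + y) / 2 := by
  have h : Real.sqrt (x * y) ≤ Real.sqrt (((x + y) / 2) ^ 2) := by
    apply Real.sqrt_le_sqrt
    have he : ((x + y) / 2) ^ 2 - x * y = ((x - y) / 2) ^ 2 := by ring
    have := sq_nonneg ((x - y) / 2)
    linarith
  rwa [Real.sqrt_sq (by positivity)] at h

private lemma abs_add_add_abs_sub_le {x y : ℝ} (hx : |x| ≤ 1) (hy : |y| ≤ 1) :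
    |x + y| + |x - y| ≤ 2 := by
  rw [abs_le] at hx hy
  rcases abs_cases (x + y) with ⟨h1, _⟩ | ⟨h1, _⟩ <;>
    rcases abs_cases (x - y) with ⟨h2, _⟩ | ⟨h2, _⟩ <;> linarith

private lemma bilocal_main_aux {Λ M : Type*} [MeasurableSpace Λ] [MeasurableSpace M]
    (q₁ : Measure Λ) (q₂ : Measure M)
    [IsProbabilityMeasure q₁] [IsProbabilityMeasure q₂]
    (a a' : Λ → ℝ) (b b' : Λ → M → ℝ) (c c' : M → ℝ)
    (ha0 : ∀ l, 0 ≤ a l) (ha0' : ∀ l, 0 ≤ a' l)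
    (hc0 : ∀ m, 0 ≤ c m) (hc0' : ∀ m, 0 ≤ c' m)
    (hb0 : ∀ l m, 0 ≤ b l m) (hb1 : ∀ l m, b l m ≤ 1)
    (hb0' : ∀ l m, 0 ≤ b' l m) (hb1' : ∀ l m, b' l m ≤ 1)
    (ha2 : ∀ l, a l + a' l ≤ 2) (hc2 : ∀ m, c m + c' m ≤ 2)
    (hFi : Integrable (fun p : Λ × M => a p.1 * b p.1 p.2 * c p.2) (q₁.prod q₂))
    (hGi : Integrable (fun p : Λ × M => a' p.1 * b' p.1 p.2 * c' p.2) (q₁.prod q₂)) :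
    Real.sqrt (∫ p, a p.1 * b p.1 p.2 * c p.2 ∂(q₁.prod q₂)) +
      Real.sqrt (∫ p, a' p.1 * b' p.1 p.2 * c' p.2 ∂(q₁.prod q₂)) ≤ 2 := by
  set F : Λ × M → ℝ := fun p => a p.1 * b p.1 p.2 * c p.2 with hFdef
  set G : Λ × M → ℝ := fun p => a' p.1 * b' p.1 p.2 * c' p.2 with hGdef
  have hF0 : ∀ p, 0 ≤ F p := fun p =>
    mul_nonneg (mul_nonneg (ha0 _) (hb0 _ _)) (hc0 _)
  have hG0 : ∀ p, 0 ≤ G p :=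
    fun p => mul_nonneg (mul_nonneg (ha0' _) (hb0' _ _)) (hc0' _)
  -- marginals in μ
  set V : M → ℝ := fun m => ∫ l, F (l, m) ∂q₁ with hVdef
  set V' : M → ℝ := fun m => ∫ l, G (l, m) ∂q₁ with hV'def
  have hV0 : ∀ m, 0 ≤ V m := fun m => integral_nonneg fun l => hF0 (l, m)
  have hV'0 : ∀ m, 0 ≤ V' m := fun m => integral_nonneg fun l => hG0 (l, m)
  have hVint : Integrable V q₂ := hFi.integral_prod_right
  have hV'int : Integrable V' q₂ := hGi.integral_prod_right
  have hPeq : ∫ p, F p ∂(q₁.prod q₂) = ∫ m, V m ∂q₂ := integral_prod_symm F hFi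
  have hQeq : ∫ p, G p ∂(q₁.prod q₂) = ∫ m, V' m ∂q₂ := integral_prod_symm G hGi
  have hsec : ∀ᵐ m ∂q₂, Integrable (fun l => F (l, m)) q₁ := hFi.prod_left_ae
  have hsec' : ∀ᵐ m ∂q₂, Integrable (fun l => G (l, m)) q₁ := hGi.prod_left_ae
  -- normalized slice integrals
  set u : M → ℝ := fun m => if c m = 0 then 0 else V m / c m with hudef
  set u' : M → ℝ := fun m => if c' m = 0 then 0 else V' m / c' m with hu'def
  have hVcu : ∀ m, V m = c m * u m := by
    intro m
    by_cases h : c m = 0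
    · have hz : ∀ l, F (l, m) = 0 := fun l => by simp [hFdef, h]
      have : V m = 0 := by
        simp only [hVdef]
        rw [integral_congr_ae (Filter.Eventually.of_forall hz), integral_zero]
      simp [this, hudef, h]
    · simp only [hudef, if_neg h]
      field_simp
  have hV'cu : ∀ m, V' m = c' m * u' m := by
    intro m
    by_cases h : c' m = 0
    · have hz : ∀ l, G (l, m) = 0 := fun l => by simp [hGdef, h]
      have : V' m = 0 := by
        simp only [hV'def]
        rw [integral_congr_ae (Filter.Eventually.of_forall hz), integral_zero]
      simp [this, hu'def, h]
    · simp only [hu'def, if_neg h]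
      field_simp
  have hu0 : ∀ m, 0 ≤ u m := by
    intro m; simp only [hudef]
    by_cases h : c m = 0
    · simp [h]
    · simp only [if_neg h]
      exact div_nonneg (hV0 m) (hc0 m)
  have hu'0 : ∀ m, 0 ≤ u' m := by
    intro m; simp only [hu'def]
    by_cases h : c' m = 0
    · simp [h]
    · simp only [if_neg h]
      exact div_nonneg (hV'0 m) (hc0' m)
  have huB : ∀ᵐ m ∂q₂, u m ≤ 2 := by
    filter_upwards [hsec] with m hm
    by_cases h : c m = 0
    · simp [hudef, h]
    have hcpos : 0 < c m := lt_of_le_of_ne (hc0 m) (Ne.symm h)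
    have hV2 : V m ≤ 2 * c m := by
      have hpt : ∀ l, F (l, m) ≤ 2 * c m := by
        intro l
        have h1 : F (l, m) ≤ a l * c m := by
          have hh := mul_le_mul_of_nonneg_right
            (mul_le_mul_of_nonneg_left (hb1 l m) (ha0 l)) (hc0 m)
          simpa using hh
        have h2 : a l ≤ 2 := by linarith [ha2 l, ha0' l]
        nlinarith [hc0 m]
      calc V m ≤ ∫ _, (2 * c m : ℝ) ∂q₁ := integral_mono hm (integrable_const _) hpt
        _ = 2 * c m := by simp [measure_univ]
    simp only [hudef, if_neg h]
    rw [div_le_iff₀ hcpos]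
    linarith
  have hu'B : ∀ᵐ m ∂q₂, u' m ≤ 2 := by
    filter_upwards [hsec'] with m hm
    by_cases h : c' m = 0
    · simp [hu'def, h]
    have hcpos : 0 < c' m := lt_of_le_of_ne (hc0' m) (Ne.symm h)
    have hV2 : V' m ≤ 2 * c' m := by
      have hpt : ∀ l, G (l, m) ≤ 2 * c' m := by
        intro l
        have h1 : G (l, m) ≤ a' l * c' m := by
          have hh := mul_le_mul_of_nonneg_right
            (mul_le_mul_of_nonneg_left (hb1' l m) (ha0' l)) (hc0' m)
          simpa using hh
        have h2 : a' l ≤ 2 := by linarith [ha2 l, ha0 l]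
        nlinarith [hc0' m]
      calc V' m ≤ ∫ _, (2 * c' m : ℝ) ∂q₁ := integral_mono hm (integrable_const _) hpt
        _ = 2 * c' m := by simp [measure_univ]
    simp only [hu'def, if_neg h]
    rw [div_le_iff₀ hcpos]
    linarith
  -- the key pairwise bound
  have hpair : ∀ᵐ m₁ ∂q₂, ∀ᵐ m₂ ∂q₂, u m₁ + u' m₂ ≤ 2 := by
    filter_upwards [hsec, huB] with m₁ hm₁ hub₁
    filter_upwards [hsec', hu'B] with m₂ hm₂ hub₂
    by_cases h1 : c m₁ = 0
    · have : u m₁ = 0 := by simp [hudef, h1]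
      rw [this]; linarith
    by_cases h2 : c' m₂ = 0
    · have : u' m₂ = 0 := by simp [hu'def, h2]
      rw [this]; linarith
    have hc1 : 0 < c m₁ := lt_of_le_of_ne (hc0 m₁) (Ne.symm h1)
    have hc2' : 0 < c' m₂ := lt_of_le_of_ne (hc0' m₂) (Ne.symm h2)
    have e : u m₁ + u' m₂ = ∫ l, (F (l, m₁) / c m₁ + G (l, m₂) / c' m₂) ∂q₁ := by
      rw [integral_add (hm₁.div_const _) (hm₂.div_const _), integral_div, integral_div]
      simp only [hudef, hu'def, if_neg h1, if_neg h2, hVdef, hV'def]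
    rw [e]
    have hpt : ∀ l, F (l, m₁) / c m₁ + G (l, m₂) / c' m₂ ≤ 2 := by
      intro l
      have p1 : F (l, m₁) / c m₁ ≤ a l := by
        have he : F (l, m₁) = a l * b l m₁ * c m₁ := rfl
        rw [he, mul_div_cancel_right₀ _ h1]
        nlinarith [hb1 l m₁, hb0 l m₁, ha0 l]
      have p2 : G (l, m₂) / c' m₂ ≤ a' l := by
        have he : G (l, m₂) = a' l * b' l m₂ * c' m₂ := rfl
        rw [he, mul_div_cancel_right₀ _ h2]
        nlinarith [hb1' l m₂, hb0' l m₂, ha0' l]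
      linarith [ha2 l]
    calc ∫ l, (F (l, m₁) / c m₁ + G (l, m₂) / c' m₂) ∂q₁
        ≤ ∫ _, (2 : ℝ) ∂q₁ :=
          integral_mono ((hm₁.div_const _).add (hm₂.div_const _)) (integrable_const _) hpt
      _ = 2 := by simp [measure_univ]
  -- essential suprema
  have hNB : (ae q₂).NeBot := ae_neBot.mpr (IsProbabilityMeasure.ne_zero q₂)
  set α := essSup u q₂ with hαdef
  set β := essSup u' q₂ with hβdef
  have hbdd : Filter.IsBoundedUnder (· ≤ ·) (ae q₂) u := ⟨2, Filter.eventually_map.2 huB⟩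
  have hbdd' : Filter.IsBoundedUnder (· ≤ ·) (ae q₂) u' := ⟨2, Filter.eventually_map.2 hu'B⟩
  have hcob : Filter.IsCoboundedUnder (· ≤ ·) (ae q₂) u :=
    Filter.IsBoundedUnder.isCoboundedUnder_le
      ⟨0, Filter.eventually_map.2 (Filter.Eventually.of_forall hu0)⟩
  have hcob' : Filter.IsCoboundedUnder (· ≤ ·) (ae q₂) u' :=
    Filter.IsBoundedUnder.isCoboundedUnder_le
      ⟨0, Filter.eventually_map.2 (Filter.Eventually.of_forall hu'0)⟩
  have hαle : ∀ᵐ m ∂q₂, u m ≤ α := ae_le_essSup hbdd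
  have hβle : ∀ᵐ m ∂q₂, u' m ≤ β := ae_le_essSup hbdd'
  have hα0 : 0 ≤ α := by
    obtain ⟨m, hm⟩ := hαle.exists
    exact le_trans (hu0 m) hm
  have hβ0 : 0 ≤ β := by
    obtain ⟨m, hm⟩ := hβle.exists
    exact le_trans (hu'0 m) hm
  have hαβ : α + β ≤ 2 := by
    have step1 : ∀ᵐ m₁ ∂q₂, β ≤ 2 - u m₁ := by
      filter_upwards [hpair] with m₁ h
      exact Filter.limsup_le_of_le hcob' (h.mono fun m₂ h2 => by linarith)
    have step2 : α ≤ 2 - β := by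
      apply Filter.limsup_le_of_le hcob
      filter_upwards [step1] with m₁ h
      linarith
    linarith
  -- pointwise domination of the marginals
  have hVα : ∀ᵐ m ∂q₂, V m ≤ α * c m := by
    filter_upwards [hαle] with m h
    rw [hVcu m, mul_comm]
    exact mul_le_mul_of_nonneg_right h (hc0 m)
  have hV'β : ∀ᵐ m ∂q₂, V' m ≤ β * c' m := by
    filter_upwards [hβle] with m h
    rw [hV'cu m, mul_comm]
    exact mul_le_mul_of_nonneg_right h (hc0' m)
  set P := ∫ m, V m ∂q₂ with hPdef
  set Q := ∫ m, V' m ∂q₂ with hQdef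
  have hP0 : 0 ≤ P := integral_nonneg hV0
  have hQ0 : 0 ≤ Q := integral_nonneg hV'0
  have hPz : α = 0 → P = 0 := by
    intro h
    have hz : V =ᵐ[q₂] 0 := by
      filter_upwards [hVα] with m hm
      have := hV0 m
      have hcle := hc2 m
      have : V m ≤ 0 := by rw [h] at hm; simpa using hm
      exact le_antisymm this (hV0 m)
    rw [hPdef, integral_congr_ae hz]; simp
  have hQz : β = 0 → Q = 0 := by
    intro h
    have hz : V' =ᵐ[q₂] 0 := by
      filter_upwards [hV'β] with m hm
      have : V' m ≤ 0 := by rw [h] at hm; simpa using hm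
      exact le_antisymm this (hV'0 m)
    rw [hQdef, integral_congr_ae hz]; simp
  have hPle : α ≠ 0 → P ≤ 2 * α := by
    intro h
    have : ∀ᵐ m ∂q₂, V m ≤ 2 * α := by
      filter_upwards [hVα] with m hm
      have := hc2 m
      have := hc0' m
      nlinarith [hα0.lt_of_ne (Ne.symm h)]
    calc P ≤ ∫ _, (2 * α : ℝ) ∂q₂ := integral_mono_ae hVint (integrable_const _) this
      _ = 2 * α := by simp [measure_univ]
  have hQle : β ≠ 0 → Q ≤ 2 * β := by
    intro h
    have : ∀ᵐ m ∂q₂, V' m ≤ 2 * β := by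
      filter_upwards [hV'β] with m hm
      have := hc2 m
      have := hc0 m
      nlinarith [hβ0.lt_of_ne (Ne.symm h)]
    calc Q ≤ ∫ _, (2 * β : ℝ) ∂q₂ := integral_mono_ae hV'int (integrable_const _) this
      _ = 2 * β := by simp [measure_univ]
  -- the normalized second factors
  set γ : ℝ := if α = 0 then 0 else P / α with hγdef
  set γ' : ℝ := if β = 0 then 0 else Q / β with hγ'def
  have hγ0 : 0 ≤ γ := by
    rw [hγdef]; split
    · exact le_refl 0
    · exact div_nonneg hP0 hα0
  have hγ'0 : 0 ≤ γ' := by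
    rw [hγ'def]; split
    · exact le_refl 0
    · exact div_nonneg hQ0 hβ0
  have hPαγ : P ≤ α * γ := by
    rw [hγdef]
    by_cases h : α = 0
    · rw [if_pos h, hPz h]; simp
    · rw [if_neg h, mul_comm, div_mul_cancel₀ _ h]
  have hQβγ : Q ≤ β * γ' := by
    rw [hγ'def]
    by_cases h : β = 0
    · rw [if_pos h, hQz h]; simp
    · rw [if_neg h, mul_comm, div_mul_cancel₀ _ h]
  have hγsum : γ + γ' ≤ 2 := by
    rw [hγdef, hγ'def]
    by_cases hα : α = 0
    · by_cases hβ : β = 0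
      · simp [hα, hβ]
      · simp only [if_pos hα, if_neg hβ]
        have hq := hQle hβ
        rw [zero_add, div_le_iff₀ (hβ0.lt_of_ne (Ne.symm hβ))]
        linarith
    · by_cases hβ : β = 0
      · simp only [if_neg hα, if_pos hβ]
        have hp := hPle hα
        rw [add_zero, div_le_iff₀ (hα0.lt_of_ne (Ne.symm hα))]
        linarith
      · simp only [if_neg hα, if_neg hβ]
        have hαpos : 0 < α := hα0.lt_of_ne (Ne.symm hα)
        have hβpos : 0 < β := hβ0.lt_of_ne (Ne.symm hβ)
        have hae : ∀ᵐ m ∂q₂, V m / α + V' m / β ≤ 2 := by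
          filter_upwards [hVα, hV'β] with m h1 h2
          have e1 : V m / α ≤ c m := by
            rw [div_le_iff₀ hαpos]
            linarith [mul_comm α (c m)]
          have e2 : V' m / β ≤ c' m := by
            rw [div_le_iff₀ hβpos]
            linarith [mul_comm β (c' m)]
          linarith [hc2 m]
        have hint : ∫ m, (V m / α + V' m / β) ∂q₂ ≤ ∫ _, (2 : ℝ) ∂q₂ :=
          integral_mono_ae ((hVint.div_const _).add (hV'int.div_const _))
            (integrable_const _) hae
        rw [integral_add (hVint.div_const _) (hV'int.div_const _),
          integral_div, integral_div] at hint
        simpa [measure_univ] using hint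
  rw [hPeq, hQeq]
  calc Real.sqrt P + Real.sqrt Q
      ≤ Real.sqrt (α * γ) + Real.sqrt (β * γ') :=
        add_le_add (Real.sqrt_le_sqrt hPαγ) (Real.sqrt_le_sqrt hQβγ)
    _ ≤ (α + γ) / 2 + (β + γ') / 2 :=
        add_le_add (sqrt_mul_le_half_add hα0 hγ0) (sqrt_mul_le_half_add hβ0 hγ'0)
    _ ≤ 2 := by linarith

open MeasureTheory in
/-- In a 2-local hidden variable model with densities q₁, q₂ and local response
expectations A_x(λ), B_y(λ,μ), C_z(μ) ∈ [-1,1], the correlators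
I = ∫∫ (A₀+A₁)B₀(C₀+C₁) and J = ∫∫ (A₀-A₁)B₁(C₀-C₁) satisfy the triangle-inequality
bounds and the bilocality inequality √|I| + √|J| ≤ 2. -/
theorem bilocality_inequality
    {Λ M : Type*} [MeasurableSpace Λ] [MeasurableSpace M]
    (q₁ : Measure Λ) (q₂ : Measure M)
    [IsProbabilityMeasure q₁] [IsProbabilityMeasure q₂] [SFinite q₂]
    (A : Fin 2 → Λ → ℝ) (B : Fin 2 → Λ → M → ℝ) (C : Fin 2 → M → ℝ)
    (hA : ∀ x l, |A x l| ≤ 1) (hB : ∀ y l m, |B y l m| ≤ 1) (hC : ∀ z m, |C z m| ≤ 1)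
    (hIint : Integrable (fun p : Λ × M =>
      (A 0 p.1 + A 1 p.1) * B 0 p.1 p.2 * (C 0 p.2 + C 1 p.2)) (q₁.prod q₂))
    (hJint : Integrable (fun p : Λ × M =>
      (A 0 p.1 - A 1 p.1) * B 1 p.1 p.2 * (C 0 p.2 - C 1 p.2)) (q₁.prod q₂))
    (I J : ℝ)
    (hI : I = ∫ p, (A 0 p.1 + A 1 p.1) * B 0 p.1 p.2 * (C 0 p.2 + C 1 p.2) ∂(q₁.prod q₂))
    (hJ : J = ∫ p, (A 0 p.1 - A 1 p.1) * B 1 p.1 p.2 * (C 0 p.2 - C 1 p.2) ∂(q₁.prod q₂)) :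
    |I| ≤ (∫ p, |A 0 p.1 + A 1 p.1| * |B 0 p.1 p.2| * |C 0 p.2 + C 1 p.2| ∂(q₁.prod q₂)) ∧
    |J| ≤ (∫ p, |A 0 p.1 - A 1 p.1| * |B 1 p.1 p.2| * |C 0 p.2 - C 1 p.2| ∂(q₁.prod q₂)) ∧
    Real.sqrt |I| + Real.sqrt |J| ≤ 2 := by
  have h1 : |I| ≤ ∫ p, |A 0 p.1 + A 1 p.1| * |B 0 p.1 p.2| * |C 0 p.2 + C 1 p.2|
      ∂(q₁.prod q₂) := by
    rw [hI]
    simpa using norm_integral_le_integral_norm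
      (fun p : Λ × M => (A 0 p.1 + A 1 p.1) * B 0 p.1 p.2 * (C 0 p.2 + C 1 p.2))
      (μ := q₁.prod q₂)
  have h2 : |J| ≤ ∫ p, |A 0 p.1 - A 1 p.1| * |B 1 p.1 p.2| * |C 0 p.2 - C 1 p.2|
      ∂(q₁.prod q₂) := by
    rw [hJ]
    simpa using norm_integral_le_integral_norm
      (fun p : Λ × M => (A 0 p.1 - A 1 p.1) * B 1 p.1 p.2 * (C 0 p.2 - C 1 p.2))
      (μ := q₁.prod q₂)
  have hFi' : Integrable (fun p : Λ × M =>
      |A 0 p.1 + A 1 p.1| * |B 0 p.1 p.2| * |C 0 p.2 + C 1 p.2|) (q₁.prod q₂) :=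
    hIint.abs.congr (Filter.Eventually.of_forall fun p => by simp [abs_mul])
  have hGi' : Integrable (fun p : Λ × M =>
      |A 0 p.1 - A 1 p.1| * |B 1 p.1 p.2| * |C 0 p.2 - C 1 p.2|) (q₁.prod q₂) :=
    hJint.abs.congr (Filter.Eventually.of_forall fun p => by simp [abs_mul])
  have key := bilocal_main_aux q₁ q₂
    (fun l => |A 0 l + A 1 l|) (fun l => |A 0 l - A 1 l|)
    (fun l m => |B 0 l m|) (fun l m => |B 1 l m|)
    (fun m => |C 0 m + C 1 m|) (fun m => |C 0 m - C 1 m|)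
    (fun l => abs_nonneg _) (fun l => abs_nonneg _)
    (fun m => abs_nonneg _) (fun m => abs_nonneg _)
    (fun l m => abs_nonneg _) (fun l m => hB 0 l m)
    (fun l m => abs_nonneg _) (fun l m => hB 1 l m)
    (fun l => abs_add_add_abs_sub_le (hA 0 l) (hA 1 l))
    (fun m => abs_add_add_abs_sub_le (hC 0 m) (hC 1 m))
    hFi' hGi'
  refine ⟨h1, h2, ?_⟩
  have s1 := Real.sqrt_le_sqrt h1
  have s2 := Real.sqrt_le_sqrt h2
  linarith [key]
end
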